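/- Let m ≥ 1 and 1 ≤ r ≤ m be integers and let Γ be any set of r-element subsets of [m] (the message symbols set to zero). Call a subset S of [m] with |S| ≥ r deleted if every r-element subset of S belongs to Γ. Then for every r-element subset R of [m] with R ∉ Γ and every subset S of [m] \ R: (i) the set R ∪ S is not deleted, so the family {R₀ ∪ S : R₀ ⊆ R, |R₀ ∪ S| ≥ r} contains at least one non-deleted coordinate; and (ii) for every coefficient vector a vanishing on Γ, the sum of f_a over the non-deleted members of this family equals a(R). Consequently the shortened code retains 2^{m−r} pairwise disjoint nonempty recovery sets for every remaining message symbol. -/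

import Mathlib

open Finset

lemma subset_union_iff_sdiff' {α : Type*} [DecidableEq α] (T S R₀ : Finset α) :
    T ⊆ R₀ ∪ S ↔ T \ S ⊆ R₀ := by
  constructor
  · intro h x hx
    rcases mem_sdiff.mp hx with ⟨hxT, hxS⟩
    rcases mem_union.mp (h hxT) with h' | h'
    · exact h'
    · exact absurd h' hxS
  · intro h x hx
    by_cases hxS : x ∈ S
    · exact mem_union_right _ hxS
    · exact mem_union_left _ (h (mem_sdiff.mpr ⟨hx, hxS⟩))

lemma count_between' {α : Type*} [DecidableEq α] (R B : Finset α) (hB : B ⊆ R) :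
    (R.powerset.filter (fun R₀ => B ⊆ R₀)).card = 2 ^ (R \ B).card := by
  rw [← card_powerset]
  apply Finset.card_bij' (fun R₀ _ => R₀ \ B) (fun X _ => X ∪ B)
  · intro R₀ hR₀
    rw [mem_filter, mem_powerset] at hR₀
    exact mem_powerset.mpr (sdiff_subset_sdiff hR₀.1 Subset.rfl)
  · intro X hX
    rw [mem_powerset] at hX
    rw [mem_filter, mem_powerset]
    exact ⟨union_subset (hX.trans sdiff_subset) hB, subset_union_right⟩
  · intro R₀ hR₀
    rw [mem_filter] at hR₀
    rw [sdiff_union_self_eq_union, union_eq_left.mpr hR₀.2]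
  · intro X hX
    rw [mem_powerset] at hX
    rw [union_sdiff_right]
    exact sdiff_eq_self_of_disjoint (disjoint_of_subset_left hX sdiff_disjoint)

lemma recov_sum (m r : ℕ) (Γ : Finset (Finset (Fin m)))
    (R : Finset (Fin m)) (hR : R.card = r) (hRΓ : R ∉ Γ)
    (S : Finset (Fin m)) (hS : Disjoint S R)
    (a : Finset (Fin m) → ZMod 2) (ha : ∀ T ∈ Γ, a T = 0) :
    ∑ A ∈ (R.powerset.image (fun R₀ => R₀ ∪ S)).filter
        (fun A => r ≤ A.card ∧ ¬ ∀ T ∈ A.powerset, T.card = r → T ∈ Γ),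
      (∑ T ∈ A.powerset.filter (fun T => T.card = r), a T) = a R := by
  have hzero : ∀ A ∈ R.powerset.image (fun R₀ => R₀ ∪ S),
      (∑ T ∈ A.powerset.filter (fun T => T.card = r), a T) ≠ 0 →
      (r ≤ A.card ∧ ¬ ∀ T ∈ A.powerset, T.card = r → T ∈ Γ) := by
    intro A _ hne
    constructor
    · by_contra hlt
      push_neg at hlt
      apply hne
      have hempty : A.powerset.filter (fun T => T.card = r) = ∅ := by
        refine filter_eq_empty_iff.mpr ?_
        intro T hT hTc
        have := card_le_card (mem_powerset.mp hT)
        omega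
      rw [hempty, sum_empty]
    · intro hdel
      apply hne
      refine Finset.sum_eq_zero ?_
      intro T hT
      rw [mem_filter] at hT
      exact ha T (hdel T hT.1 hT.2)
  rw [Finset.sum_filter_of_ne hzero]
  have hinj : ∀ R₀ ∈ R.powerset, ∀ R₁ ∈ R.powerset, R₀ ∪ S = R₁ ∪ S → R₀ = R₁ := by
    have key : ∀ R', R' ⊆ R → (R' ∪ S) \ S = R' := by
      intro R' hR'
      ext x
      simp only [mem_sdiff, mem_union]
      constructor
      · rintro ⟨h1 | h1, h2⟩
        · exact h1
        · exact absurd h1 h2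
      · intro hx
        exact ⟨Or.inl hx, fun hxS => (disjoint_left.mp hS hxS) (hR' hx)⟩
    intro R₀ h0 R₁ h1 h
    rw [← key R₀ (mem_powerset.mp h0), ← key R₁ (mem_powerset.mp h1), h]
  rw [Finset.sum_image hinj]
  have hstep : ∀ R₀ ∈ R.powerset,
      ∑ T ∈ (R₀ ∪ S).powerset.filter (fun T => T.card = r), a T
      = ∑ T ∈ (R ∪ S).powerset.filter (fun T => T.card = r),
          if T ⊆ R₀ ∪ S then a T else 0 := by
    intro R₀ hR₀
    rw [← Finset.sum_filter]
    congr 1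
    ext T
    simp only [mem_filter, mem_powerset]
    constructor
    · rintro ⟨hT, hcard⟩
      exact ⟨⟨hT.trans (union_subset_union_left (mem_powerset.mp hR₀)), hcard⟩, hT⟩
    · rintro ⟨⟨_, hcard⟩, hT⟩
      exact ⟨hT, hcard⟩
  rw [Finset.sum_congr rfl hstep, Finset.sum_comm]
  have hRU : R ∈ (R ∪ S).powerset.filter (fun T => T.card = r) := by
    rw [mem_filter, mem_powerset]
    exact ⟨subset_union_left, hR⟩
  have hinner : ∀ T ∈ (R ∪ S).powerset.filter (fun T => T.card = r),
      (∑ R₀ ∈ R.powerset, if T ⊆ R₀ ∪ S then a T else 0)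
      = if T = R then a T else 0 := by
    intro T hT
    rw [mem_filter, mem_powerset] at hT
    by_cases hTR : T = R
    · subst hTR
      rw [if_pos rfl, ← Finset.sum_filter]
      have hfilt : T.powerset.filter (fun R₀ => T ⊆ R₀ ∪ S) = {T} := by
        ext R₀
        rw [mem_filter, mem_powerset, mem_singleton]
        constructor
        · rintro ⟨h1, h2⟩
          refine Subset.antisymm h1 ?_
          intro x hx
          rcases mem_union.mp (h2 hx) with h' | h'
          · exact h'
          · exact absurd hx (disjoint_left.mp hS h')
        · rintro rfl
          exact ⟨Subset.rfl, subset_union_left⟩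
      rw [hfilt, sum_singleton]
    · rw [if_neg hTR, ← Finset.sum_filter, Finset.sum_const]
      have hfe : R.powerset.filter (fun R₀ => T ⊆ R₀ ∪ S)
          = R.powerset.filter (fun R₀ => T \ S ⊆ R₀) := by
        apply filter_congr
        intro R₀ _
        exact subset_union_iff_sdiff' T S R₀
      have heven : 2 ∣ (R.powerset.filter (fun R₀ => T ⊆ R₀ ∪ S)).card := by
        rw [hfe]
        by_cases hBR : T \ S ⊆ R
        · rw [count_between' R (T \ S) hBR]
          have hne : ¬ R ⊆ T \ S := by
            intro h
            have hBeq : T \ S = R := Subset.antisymm hBR h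
            apply hTR
            have h1 : T \ S ⊆ T := sdiff_subset
            have h2 : T \ S = T :=
              eq_of_subset_of_card_le h1 (by rw [hBeq, hR, hT.2])
            rw [← h2, hBeq]
          have hpos : 0 < (R \ (T \ S)).card :=
            card_pos.mpr (sdiff_nonempty.mpr hne)
          exact dvd_pow_self 2 hpos.ne'
        · have hemp : R.powerset.filter (fun R₀ => T \ S ⊆ R₀) = ∅ := by
            refine filter_eq_empty_iff.mpr ?_
            intro R₀ hR₀ h
            exact hBR (h.trans (mem_powerset.mp hR₀))
          rw [hemp, card_empty]
          exact dvd_zero 2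
      obtain ⟨k, hk⟩ := heven
      rw [hk]
      have h2 : (2 : ZMod 2) = 0 := by decide
      simp [nsmul_eq_mul, Nat.cast_mul, h2]
  rw [Finset.sum_congr rfl hinner, Finset.sum_ite_eq' _ R, if_pos hRU]

theorem stmt_4' (m r : ℕ) (hm : 1 ≤ m) (hr : 1 ≤ r) (hrm : r ≤ m)
    (Γ : Finset (Finset (Fin m))) (hΓ : ∀ T ∈ Γ, T.card = r) :
    (∀ R : Finset (Fin m), R.card = r → R ∉ Γ →
      ∀ S : Finset (Fin m), S ⊆ Finset.univ \ R →
        ((¬ ∀ T ∈ (R ∪ S).powerset, T.card = r → T ∈ Γ) ∧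
          (∃ A ∈ (R.powerset.image (fun R₀ => R₀ ∪ S)).filter (fun A => r ≤ A.card),
            ¬ ∀ T ∈ A.powerset, T.card = r → T ∈ Γ) ∧
          (∀ a : Finset (Fin m) → ZMod 2, (∀ T ∈ Γ, a T = 0) →
            ∑ A ∈ (R.powerset.image (fun R₀ => R₀ ∪ S)).filter
                (fun A => r ≤ A.card ∧ ¬ ∀ T ∈ A.powerset, T.card = r → T ∈ Γ),
              (∑ T ∈ A.powerset.filter (fun T => T.card = r), a T) = a R))) ∧
    (∀ R : Finset (Fin m), R.card = r → R ∉ Γ →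
      ∃ F : Fin (2 ^ (m - r)) → Finset (Finset (Fin m)),
        (∀ t, (F t).Nonempty) ∧
        (∀ t, ∀ A ∈ F t, r ≤ A.card ∧ ¬ ∀ T ∈ A.powerset, T.card = r → T ∈ Γ) ∧
        (∀ t₁ t₂, t₁ ≠ t₂ → Disjoint (F t₁) (F t₂)) ∧
        (∀ a : Finset (Fin m) → ZMod 2, (∀ T ∈ Γ, a T = 0) →
          ∀ t, ∑ A ∈ F t, (∑ T ∈ A.powerset.filter (fun T => T.card = r), a T) = a R)) := by
  have hnotdel : ∀ R : Finset (Fin m), R.card = r → R ∉ Γ → ∀ S : Finset (Fin m),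
      ¬ ∀ T ∈ (R ∪ S).powerset, T.card = r → T ∈ Γ := by
    intro R hRc hRΓ S h
    exact hRΓ (h R (mem_powerset.mpr subset_union_left) hRc)
  have hmemRS : ∀ R S : Finset (Fin m), R.card = r →
      R ∪ S ∈ (R.powerset.image (fun R₀ => R₀ ∪ S)).filter (fun A => r ≤ A.card) := by
    intro R S hRc
    rw [mem_filter]
    refine ⟨mem_image.mpr ⟨R, mem_powerset.mpr Subset.rfl, rfl⟩, ?_⟩
    rw [← hRc]
    exact card_le_card subset_union_left
  constructor
  · intro R hRc hRΓ S hSsub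
    have hdisj : Disjoint S R := by
      rw [disjoint_left]
      intro x hx
      exact (mem_sdiff.mp (hSsub hx)).2
    refine ⟨hnotdel R hRc hRΓ S, ⟨R ∪ S, hmemRS R S hRc, hnotdel R hRc hRΓ S⟩, ?_⟩
    intro a ha
    exact recov_sum m r Γ R hRc hRΓ S hdisj a ha
  · intro R hRc hRΓ
    have hcard' : ((Finset.univ \ R).powerset).card = 2 ^ (m - r) := by
      rw [card_powerset, card_sdiff_of_subset (subset_univ R), card_univ,
        Fintype.card_fin, hRc]
    let e := (((Finset.univ \ R).powerset).equivFin.trans (finCongr hcard')).symm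
    have hSdisj : ∀ t, Disjoint ((e t : Finset (Fin m))) R := by
      intro t
      have h := mem_powerset.mp (Finset.mem_coe.mp (e t).2)
      rw [disjoint_left]
      intro x hx
      exact (mem_sdiff.mp (h hx)).2
    set F : Fin (2 ^ (m - r)) → Finset (Finset (Fin m)) := fun t =>
      (R.powerset.image (fun R₀ => R₀ ∪ (e t : Finset (Fin m)))).filter
        (fun A => r ≤ A.card ∧ ¬ ∀ T ∈ A.powerset, T.card = r → T ∈ Γ) with hF
    have hAdiff : ∀ t, ∀ A ∈ F t, A \ R = (e t : Finset (Fin m)) := by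
      intro t A hA
      rw [hF, mem_filter] at hA
      obtain ⟨R₀, hR₀, rfl⟩ := mem_image.mp hA.1
      have hR₀R := mem_powerset.mp hR₀
      ext x
      simp only [mem_sdiff, mem_union]
      constructor
      · rintro ⟨h1 | h1, h2⟩
        · exact absurd (hR₀R h1) h2
        · exact h1
      · intro hx
        exact ⟨Or.inr hx, fun hxR => disjoint_left.mp (hSdisj t) hx hxR⟩
    refine ⟨F, ?_, ?_, ?_, ?_⟩
    · intro t
      refine ⟨R ∪ (e t : Finset (Fin m)), ?_⟩
      rw [hF, mem_filter]
      have h1 := hmemRS R (e t : Finset (Fin m)) hRc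
      rw [mem_filter] at h1
      exact ⟨h1.1, h1.2, hnotdel R hRc hRΓ _⟩
    · intro t A hA
      rw [hF, mem_filter] at hA
      exact hA.2
    · intro t₁ t₂ hne
      rw [Finset.disjoint_left]
      intro A h1 h2
      apply hne
      have : (e t₁ : Finset (Fin m)) = (e t₂ : Finset (Fin m)) := by
        rw [← hAdiff t₁ A h1, ← hAdiff t₂ A h2]
      exact e.injective (Subtype.ext this)
    · intro a ha t
      exact recov_sum m r Γ R hRc hRΓ _ (hSdisj t) a ha



/-- Shortening PRM(r, m−1) by a set `Γ` of r-element subsets.  A coordinate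
`S` (with `|S| ≥ r`) is deleted when all of its r-element subsets lie in `Γ`.  For every
r-set `R ∉ Γ` and every `S ⊆ [m] \ R`: (i) `R ∪ S` is not deleted, so the recovery family
`{R₀ ∪ S : R₀ ⊆ R, |R₀ ∪ S| ≥ r}` contains a non-deleted coordinate; (ii) for every
coefficient vector `a` vanishing on `Γ`, the sum of `f_a` over the non-deleted members of
this family equals `a(R)`.  Consequently the shortened code retains `2^(m−r)` pairwise
disjoint nonempty recovery sets for every remaining message symbol. -/
theorem stmt_4 (m r : ℕ) (hm : 1 ≤ m) (hr : 1 ≤ r) (hrm : r ≤ m)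
    (Γ : Finset (Finset (Fin m))) (hΓ : ∀ T ∈ Γ, T.card = r) :
    (∀ R : Finset (Fin m), R.card = r → R ∉ Γ →
      ∀ S : Finset (Fin m), S ⊆ Finset.univ \ R →
        ((¬ ∀ T ∈ (R ∪ S).powerset, T.card = r → T ∈ Γ) ∧
          (∃ A ∈ (R.powerset.image (fun R₀ => R₀ ∪ S)).filter (fun A => r ≤ A.card),
            ¬ ∀ T ∈ A.powerset, T.card = r → T ∈ Γ) ∧
          (∀ a : Finset (Fin m) → ZMod 2, (∀ T ∈ Γ, a T = 0) →
            ∑ A ∈ (R.powerset.image (fun R₀ => R₀ ∪ S)).filter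
                (fun A => r ≤ A.card ∧ ¬ ∀ T ∈ A.powerset, T.card = r → T ∈ Γ),
              (∑ T ∈ A.powerset.filter (fun T => T.card = r), a T) = a R))) ∧
    (∀ R : Finset (Fin m), R.card = r → R ∉ Γ →
      ∃ F : Fin (2 ^ (m - r)) → Finset (Finset (Fin m)),
        (∀ t, (F t).Nonempty) ∧
        (∀ t, ∀ A ∈ F t, r ≤ A.card ∧ ¬ ∀ T ∈ A.powerset, T.card = r → T ∈ Γ) ∧
        (∀ t₁ t₂, t₁ ≠ t₂ → Disjoint (F t₁) (F t₂)) ∧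
        (∀ a : Finset (Fin m) → ZMod 2, (∀ T ∈ Γ, a T = 0) →
          ∀ t, ∑ A ∈ F t, (∑ T ∈ A.powerset.filter (fun T => T.card = r), a T) = a R)) := by
  exact stmt_4' m r hm hr hrm Γ hΓ
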